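/- Define m : (0,∞) → ℝ by m(Q) = log Q − (Q²−1)(2Q−1)/(Q(Q²−2Q+3)). Then: m(1) = 0; m(Q) → +∞ as Q → +∞; m is differentiable on (0,∞) with m′(Q) = (Q−3)(Q−1)(Q+1)³/(Q²(Q²−2Q+3)²); there exists a unique Q* ∈ (1,∞) with m(Q*) = 0; Q* > 3; and for every Q ∈ (1,∞), m(Q) ≤ 0 if and only if Q ≤ Q*. -/

import Mathlib

/-- The function `m(Q) = log Q − (Q²−1)(2Q−1)/(Q(Q²−2Q+3))` governing calibrability
of annuli in dimension `n = 2`. -/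
noncomputable def mfun (Q : ℝ) : ℝ :=
  Real.log Q - (Q ^ 2 - 1) * (2 * Q - 1) / (Q * (Q ^ 2 - 2 * Q + 3))

lemma mfun_deriv (Q : ℝ) (hQ : 0 < Q) :
    HasDerivAt mfun
      ((Q - 3) * (Q - 1) * (Q + 1) ^ 3 / (Q ^ 2 * (Q ^ 2 - 2 * Q + 3) ^ 2)) Q := by
  have hQ0 : Q ≠ 0 := ne_of_gt hQ
  have hD : 0 < Q ^ 2 - 2 * Q + 3 := by nlinarith [sq_nonneg (Q - 1)]
  have hDen : Q * (Q ^ 2 - 2 * Q + 3) ≠ 0 := ne_of_gt (mul_pos hQ hD)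
  have hN : HasDerivAt (fun x : ℝ => (x ^ 2 - 1) * (2 * x - 1)) (6 * Q ^ 2 - 2 * Q - 2) Q := by
    have := ((hasDerivAt_pow 2 Q).sub_const 1).mul
      (((hasDerivAt_id Q).const_mul 2).sub_const 1)
    simp only [id_eq] at this
    exact this.congr_deriv (by norm_num; ring)
  have hDd : HasDerivAt (fun x : ℝ => x * (x ^ 2 - 2 * x + 3)) (3 * Q ^ 2 - 4 * Q + 3) Q := by
    have := (hasDerivAt_id Q).mul
      (((hasDerivAt_pow 2 Q).sub ((hasDerivAt_id Q).const_mul 2)).add_const 3)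
    simp only [id_eq] at this
    exact this.congr_deriv (by simp only [Pi.sub_apply, id_eq]; norm_num; ring)
  have hfrac := hN.div hDd hDen
  have h := (Real.hasDerivAt_log hQ0).sub hfrac
  exact h.congr_deriv (by
    rw [inv_eq_one_div, div_sub_div _ _ hQ0 (pow_ne_zero 2 hDen),
      div_eq_div_iff (mul_ne_zero hQ0 (pow_ne_zero 2 hDen))
        (mul_ne_zero (pow_ne_zero 2 hQ0) (pow_ne_zero 2 hD.ne'))]
    ring)

lemma mfun_contAt (Q : ℝ) (hQ : 0 < Q) : ContinuousAt mfun Q :=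
  (mfun_deriv Q hQ).continuousAt

lemma mfun_anti : StrictAntiOn mfun (Set.Icc 1 3) := by
  apply strictAntiOn_of_deriv_neg (convex_Icc 1 3)
  · exact fun x hx => (mfun_contAt x (by linarith [hx.1])).continuousWithinAt
  · intro x hx
    rw [interior_Icc] at hx
    obtain ⟨h1, h3⟩ := hx
    have hx0 : (0:ℝ) < x := by linarith
    rw [(mfun_deriv x hx0).deriv]
    apply div_neg_of_neg_of_pos
    · exact mul_neg_of_neg_of_pos
        (mul_neg_of_neg_of_pos (by linarith) (by linarith)) (by positivity)
    · have : (0:ℝ) < x ^ 2 - 2 * x + 3 := by nlinarith [sq_nonneg (x - 1)]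
      positivity

lemma mfun_mono : StrictMonoOn mfun (Set.Ici 3) := by
  apply strictMonoOn_of_deriv_pos (convex_Ici 3)
  · exact fun x hx => (mfun_contAt x (by simp at hx; linarith)).continuousWithinAt
  · intro x hx
    rw [interior_Ici] at hx
    have h3 : (3:ℝ) < x := hx
    have hx0 : (0:ℝ) < x := by linarith
    rw [(mfun_deriv x hx0).deriv]
    apply div_pos
    · exact mul_pos (mul_pos (by linarith) (by linarith)) (by positivity)
    · have : (0:ℝ) < x ^ 2 - 2 * x + 3 := by nlinarith [sq_nonneg (x - 1)]
      positivity

lemma mfun_one : mfun 1 = 0 := by norm_num [mfun]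

lemma mfun_atTop : Filter.Tendsto mfun Filter.atTop Filter.atTop := by
  have hlb : ∀ᶠ Q : ℝ in Filter.atTop, Real.log Q - 6 ≤ mfun Q := by
    filter_upwards [Filter.eventually_ge_atTop (3:ℝ)] with Q hQ3
    have hQ : (0:ℝ) < Q := by linarith
    have hD : 0 < Q ^ 2 - 2 * Q + 3 := by nlinarith [sq_nonneg (Q - 1)]
    have hden : 0 < Q * (Q ^ 2 - 2 * Q + 3) := mul_pos hQ hD
    have hf : (Q ^ 2 - 1) * (2 * Q - 1) / (Q * (Q ^ 2 - 2 * Q + 3)) ≤ 6 := by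
      rw [div_le_iff₀ hden]
      nlinarith
    simp only [mfun]
    linarith
  exact Filter.tendsto_atTop_mono' _ hlb
    (Filter.tendsto_atTop_add_const_right _ (-6) Real.tendsto_log_atTop)

/-- Properties of `m`: `m(1) = 0`, `m → +∞` at `+∞`, the derivative formula on `(0,∞)`,
and existence of a unique zero `Q* ∈ (1,∞)`, which satisfies `Q* > 3` and
`m(Q) ≤ 0 ↔ Q ≤ Q*` for `Q > 1`. -/
theorem stmt_7 :
    mfun 1 = 0 ∧
    Filter.Tendsto mfun Filter.atTop Filter.atTop ∧
    (∀ Q : ℝ, 0 < Q →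
      HasDerivAt mfun
        ((Q - 3) * (Q - 1) * (Q + 1) ^ 3 / (Q ^ 2 * (Q ^ 2 - 2 * Q + 3) ^ 2)) Q) ∧
    ∃ Qs : ℝ, 1 < Qs ∧ mfun Qs = 0 ∧
      (∀ Q : ℝ, 1 < Q → mfun Q = 0 → Q = Qs) ∧
      3 < Qs ∧
      (∀ Q : ℝ, 1 < Q → (mfun Q ≤ 0 ↔ Q ≤ Qs)) := by
  have hneg : ∀ Q : ℝ, 1 < Q → Q ≤ 3 → mfun Q < 0 := by
    intro Q h1 h3
    have := mfun_anti (Set.mem_Icc.2 ⟨le_refl 1, by norm_num⟩)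
      (Set.mem_Icc.2 ⟨le_of_lt h1, h3⟩) h1
    rwa [mfun_one] at this
  have hm3 : mfun 3 < 0 := hneg 3 (by norm_num) le_rfl
  -- find B with mfun B ≥ 1
  obtain ⟨B, hB1, hB3⟩ :=
    ((mfun_atTop.eventually_ge_atTop 1).and (Filter.eventually_ge_atTop (3:ℝ))).exists
  have hcont : ContinuousOn mfun (Set.Icc 3 B) :=
    fun x hx => (mfun_contAt x (by linarith [hx.1])).continuousWithinAt
  have hIVT := intermediate_value_Icc hB3 hcont
  have h0mem : (0:ℝ) ∈ Set.Icc (mfun 3) (mfun B) := ⟨le_of_lt hm3, by linarith⟩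
  obtain ⟨Qs, hQsmem, hQs0⟩ := hIVT h0mem
  have hQs3 : 3 < Qs := by
    rcases lt_or_eq_of_le hQsmem.1 with h | h
    · exact h
    · exfalso; rw [← h] at hQs0; linarith
  refine ⟨mfun_one, mfun_atTop, mfun_deriv, Qs, by linarith, hQs0, ?_, hQs3, ?_⟩
  · intro Q h1 hQ0
    rcases le_or_gt Q 3 with h3 | h3
    · exact absurd hQ0 (ne_of_lt (hneg Q h1 h3))
    · exact mfun_mono.injOn (Set.mem_Ici.2 (le_of_lt h3)) (Set.mem_Ici.2 (le_of_lt hQs3))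
        (by rw [hQ0, hQs0])
  · intro Q h1
    constructor
    · intro hle
      by_contra hgt
      push_neg at hgt
      have := mfun_mono (Set.mem_Ici.2 (le_of_lt hQs3)) (Set.mem_Ici.2 (by linarith)) hgt
      rw [hQs0] at this
      linarith
    · intro hle
      rcases le_or_gt Q 3 with h3 | h3
      · exact le_of_lt (hneg Q h1 h3)
      · have := mfun_mono.monotoneOn (Set.mem_Ici.2 (le_of_lt h3))
          (Set.mem_Ici.2 (le_of_lt hQs3)) hle
        rw [hQs0] at this
        exact this
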